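/- arXiv:1708.04292 — 3 statements merged into one kernel-verified Lean document; each statement's English description precedes it below -/
import Mathlib

section
/- Fix $d \geq 2$, $0 < p < s < d$, $N \geq 1$, and masses $m^0,\dots,m^N > 0$. The discrete energy $\mathbf{F}(y_0,\dots,y_N) = \sum_{i \neq j} \frac{m^i m^j}{|y_i - y_j|^s} - \sum_{i=1}^N \frac{m^i}{|y_i|^p}$ attains its infimum over the admissible class $\Sigma_N = \{(y_0,\dots,y_N) : y_0 = 0, \ y_i \text{ pairwise distinct}\}$. -/
open MeasureTheory Metric Set Filter Finset
open scoped ENNReal Topology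

/-- The discrete interaction energy `𝐅_{N,m}(x₀,…,x_N)` with Riesz repulsion exponent `s`
and attraction exponent `p` (the points are indexed by `0,…,N`). -/
noncomputable def discF (d : ℕ) (s p : ℝ) (m : ℕ → ℝ)
    (x : ℕ → EuclideanSpace ℝ (Fin d)) (N : ℕ) : ℝ :=
  (∑ i ∈ Finset.range (N + 1), ∑ j ∈ Finset.range (N + 1),
      if i = j then 0 else m i * m j / ‖x i - x j‖ ^ s)
    - ∑ i ∈ Finset.Icc 1 N, m i / ‖x i‖ ^ p

/-- For `0 < p < s` and `a,b > 0`, the function `r ↦ a/r^s - b/r^p` is bounded below on `(0,∞)`. -/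
lemma aux_pow_lb (s p a b : ℝ) (hp : 0 < p) (hps : p < s) (ha : 0 < a) (hb : 0 < b) :
    ∃ B : ℝ, 0 ≤ B ∧ ∀ r : ℝ, 0 < r → -B ≤ a / r ^ s - b / r ^ p := by
  set r0 : ℝ := (a / b) ^ (s - p)⁻¹ with hr0def
  have hab : 0 < a / b := div_pos ha hb
  have hr0 : 0 < r0 := Real.rpow_pos_of_pos hab _
  refine ⟨b / r0 ^ p, le_of_lt (div_pos hb (Real.rpow_pos_of_pos hr0 _)), fun r hr => ?_⟩
  rcases le_total r r0 with h | h
  · have key : b / r ^ p ≤ a / r ^ s := by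
      rw [div_le_div_iff₀ (Real.rpow_pos_of_pos hr _) (Real.rpow_pos_of_pos hr _)]
      have hs : s = p + (s - p) := by ring
      rw [hs, Real.rpow_add hr]
      have h1 : r ^ (s - p) ≤ a / b := by
        calc r ^ (s - p) ≤ r0 ^ (s - p) :=
              Real.rpow_le_rpow hr.le h (by linarith)
          _ = a / b := Real.rpow_inv_rpow hab.le (sub_pos.mpr hps).ne'
      calc b * (r ^ p * r ^ (s - p)) = (r ^ (s - p) * b) * r ^ p := by ring
        _ ≤ (a / b * b) * r ^ p := by
            have : r ^ (s - p) * b ≤ a / b * b := by nlinarith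
            nlinarith [Real.rpow_pos_of_pos hr p]
        _ = a * r ^ p := by field_simp
    have h2 : 0 ≤ a / r ^ s - b / r ^ p := by linarith
    have h3 : 0 ≤ b / r0 ^ p := le_of_lt (div_pos hb (Real.rpow_pos_of_pos hr0 _))
    linarith
  · have h1 : b / r ^ p ≤ b / r0 ^ p := by
      apply div_le_div_of_nonneg_left hb.le (Real.rpow_pos_of_pos hr0 _)
      exact Real.rpow_le_rpow hr0.le h hp.le
    have h2 : 0 ≤ a / r ^ s := by positivity
    linarith


/-- `discF` only depends on the values `x i` for `i ≤ N`. -/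
lemma discF_congr (d N : ℕ) (s p : ℝ) (m : ℕ → ℝ) (x y : ℕ → EuclideanSpace ℝ (Fin d))
    (h : ∀ i ≤ N, x i = y i) : discF d s p m x N = discF d s p m y N := by
  unfold discF
  congr 1
  · refine Finset.sum_congr rfl fun i hi => Finset.sum_congr rfl fun j hj => ?_
    rw [Finset.mem_range, Nat.lt_succ_iff] at hi hj
    rw [h i hi, h j hj]
  · refine Finset.sum_congr rfl fun i hi => ?_
    rw [Finset.mem_Icc] at hi
    rw [h i hi.2]

lemma discF_ge (d N : ℕ) (s p : ℝ) (m : ℕ → ℝ) (hm : ∀ i, 0 < m i)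
    (x : ℕ → EuclideanSpace ℝ (Fin d)) (hx0 : x 0 = 0)
    (i j : ℕ) (hi : i ≤ N) (hj : j ≤ N) (hij : i ≠ j) :
    m i * m j / ‖x i - x j‖ ^ s
      + (∑ k ∈ Finset.Icc 1 N, (m 0 * m k / ‖x k‖ ^ s - m k / ‖x k‖ ^ p))
      ≤ discF d s p m x N := by
  rw [Finset.sum_sub_distrib]
  unfold discF
  have key : m i * m j / ‖x i - x j‖ ^ s + ∑ k ∈ Finset.Icc 1 N, m 0 * m k / ‖x k‖ ^ s
      ≤ ∑ a ∈ Finset.range (N + 1), ∑ b ∈ Finset.range (N + 1),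
          if a = b then 0 else m a * m b / ‖x a - x b‖ ^ s := by
    set f : ℕ × ℕ → ℝ :=
      fun q => if q.1 = q.2 then 0 else m q.1 * m q.2 / ‖x q.1 - x q.2‖ ^ s with hf
    have hfnn : ∀ q : ℕ × ℕ, 0 ≤ f q := by
      intro q
      simp only [hf]
      split
      · exact le_refl 0
      · have h1 : 0 < m q.1 * m q.2 := mul_pos (hm _) (hm _)
        have h2 : (0:ℝ) ≤ ‖x q.1 - x q.2‖ ^ s := Real.rpow_nonneg (norm_nonneg _) s
        positivity
    set P : ℕ × ℕ := if i = 0 then (j, i) else (i, j) with hP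
    have hP1 : P.1 ≠ 0 := by
      by_cases h : i = 0
      · simp only [hP, if_pos h]
        subst h; exact Ne.symm hij
      · simp only [hP, if_neg h]; exact h
    have hPval : f P = m i * m j / ‖x i - x j‖ ^ s := by
      by_cases h : i = 0
      · simp only [hP, if_pos h, hf]
        rw [if_neg (fun hji : j = i => hij hji.symm)]
        rw [mul_comm (m j) (m i), norm_sub_rev]
      · simp only [hP, if_neg h, hf]
        rw [if_neg hij]
    set U : Finset (ℕ × ℕ) := insert P ((Finset.Icc 1 N).image fun k => ((0:ℕ), k)) with hU
    have hPnot : P ∉ (Finset.Icc 1 N).image fun k => ((0:ℕ), k) := by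
      intro hmem
      rw [Finset.mem_image] at hmem
      obtain ⟨k, _, hk⟩ := hmem
      exact hP1 (by rw [← hk])
    have hUsum : ∑ q ∈ U, f q
        = m i * m j / ‖x i - x j‖ ^ s + ∑ k ∈ Finset.Icc 1 N, m 0 * m k / ‖x k‖ ^ s := by
      rw [hU, Finset.sum_insert hPnot, hPval]
      congr 1
      rw [Finset.sum_image (by intro a _ b _ h; exact (Prod.mk.injEq _ _ _ _).mp h |>.2)]
      refine Finset.sum_congr rfl fun k hk => ?_
      rw [Finset.mem_Icc] at hk
      have hk0 : (0:ℕ) ≠ k := by omega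
      simp only [hf]
      rw [if_neg hk0, hx0, zero_sub, norm_neg]
    have hUsub : U ⊆ Finset.range (N + 1) ×ˢ Finset.range (N + 1) := by
      intro q hq
      rw [hU, Finset.mem_insert] at hq
      rcases hq with hq | hq
      · subst hq
        by_cases h : i = 0 <;>
          simp only [hP, if_pos, if_neg, Finset.mem_product, Finset.mem_range, Nat.lt_succ_iff] <;>
          first
            | (constructor <;> omega)
            | skip
        · simp [h, Finset.mem_product, Finset.mem_range, Nat.lt_succ_iff]; omega
        · simp [h, Finset.mem_product, Finset.mem_range, Nat.lt_succ_iff]; omega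
      · rw [Finset.mem_image] at hq
        obtain ⟨k, hk, rfl⟩ := hq
        rw [Finset.mem_Icc] at hk
        simp [Finset.mem_product, Finset.mem_range, Nat.lt_succ_iff]; omega
    calc m i * m j / ‖x i - x j‖ ^ s + ∑ k ∈ Finset.Icc 1 N, m 0 * m k / ‖x k‖ ^ s
        = ∑ q ∈ U, f q := hUsum.symm
      _ ≤ ∑ q ∈ Finset.range (N + 1) ×ˢ Finset.range (N + 1), f q :=
          Finset.sum_le_sum_of_subset_of_nonneg hUsub (fun q _ _ => hfnn q)
      _ = ∑ a ∈ Finset.range (N + 1), ∑ b ∈ Finset.range (N + 1),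
            if a = b then 0 else m a * m b / ‖x a - x b‖ ^ s := Finset.sum_product _ _ _
  linarith [key]

lemma aux_chooseR (s p M μ c : ℝ) (hp : 0 < p) (hps : p < s) (hμ : 0 < μ) (hc : 0 < c) :
    ∃ R : ℝ, 1 ≤ R ∧ ∀ r : ℝ, R ≤ r → M ^ 2 ≤ μ * c * r ^ (s - p) := by
  set t : ℝ := max 1 (M ^ 2 / (μ * c)) with ht
  have ht1 : (1:ℝ) ≤ t := le_max_left _ _
  have ht0 : (0:ℝ) ≤ t := by linarith
  set R0 : ℝ := t ^ (s - p)⁻¹ with hR0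
  have hR00 : 0 ≤ R0 := Real.rpow_nonneg ht0 _
  refine ⟨max 1 R0, le_max_left _ _, fun r hr => ?_⟩
  have hr0 : R0 ≤ r := le_trans (le_max_right _ _) hr
  have h1 : t ≤ r ^ (s - p) := by
    calc t = R0 ^ (s - p) := (Real.rpow_inv_rpow ht0 (sub_pos.mpr hps).ne').symm
      _ ≤ r ^ (s - p) := Real.rpow_le_rpow hR00 hr0 (by linarith)
  have h2 : M ^ 2 ≤ μ * c * t := by
    have : M ^ 2 / (μ * c) ≤ t := le_max_right _ _
    have hμc : 0 < μ * c := mul_pos hμ hc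
    calc M ^ 2 = μ * c * (M ^ 2 / (μ * c)) := by field_simp
      _ ≤ μ * c * t := by nlinarith
  calc M ^ 2 ≤ μ * c * t := h2
    _ ≤ μ * c * r ^ (s - p) := by nlinarith [mul_pos hμ hc]

/-- Pigeonhole: among `N+1` geometric annuli there is one containing none of the `N` values. -/
lemma aux_gap (N : ℕ) (K R : ℝ) (hK : 1 ≤ K) (hR : 0 ≤ R) (g : ℕ → ℝ) :
    ∃ k ≤ N, ∀ i ∈ Finset.Icc 1 N, g i ≤ R * K ^ k ∨ R * K ^ (k + 1) < g i := by
  by_contra hcon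
  push_neg at hcon
  -- for each k ≤ N there is i(k) ∈ Icc 1 N with R*K^k < g i ≤ R*K^(k+1)
  have hch : ∀ k ∈ Finset.range (N + 1), ∃ i ∈ Finset.Icc 1 N,
      R * K ^ k < g i ∧ g i ≤ R * K ^ (k + 1) := by
    intro k hk
    rw [Finset.mem_range, Nat.lt_succ_iff] at hk
    exact hcon k hk
  choose! F hF1 hF2 hF3 using hch
  have hmaps : ∀ k ∈ Finset.range (N + 1), F k ∈ Finset.Icc 1 N := hF1
  have hcard : (Finset.Icc 1 N).card < (Finset.range (N + 1)).card := by
    rw [Nat.card_Icc, Finset.card_range]; omega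
  obtain ⟨k, hk, k', hk', hne, heq⟩ :=
    Finset.exists_ne_map_eq_of_card_lt_of_maps_to hcard hmaps
  -- wlog k < k'
  wlog hlt : k < k' generalizing k k'
  · exact this k' hk' k hk hne.symm heq.symm (by omega)
  have h1 : g (F k) ≤ R * K ^ (k + 1) := hF3 k hk
  have h2 : R * K ^ k' < g (F k') := hF2 k' hk'
  rw [heq] at h1
  have hpow : K ^ (k + 1) ≤ K ^ k' := pow_le_pow_right₀ hK (by omega)
  have := mul_le_mul_of_nonneg_left hpow hR
  linarith

set_option maxHeartbeats 2000000 in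
lemma aux_repair (d N : ℕ) (s p : ℝ) (m : ℕ → ℝ) (hp : 0 < p) (hps : p < s)
    (hm : ∀ i, 0 < m i)
    (v : EuclideanSpace ℝ (Fin d)) (hv : ‖v‖ = 1)
    (μ : ℝ) (hμ0 : 0 < μ) (hμ : ∀ i, i ≤ N → μ ≤ m i)
    (R : ℝ) (hR1 : 1 ≤ R)
    (hBig : ∀ r : ℝ, R ≤ r →
      (∑ i ∈ Finset.range (N + 1), m i) ^ 2 / r ^ s
        ≤ μ * (1 / (((N : ℝ) + 2) * r) ^ p - 1 / ((2 * ((N : ℝ) + 2)) * r) ^ p))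
    (x : ℕ → EuclideanSpace ℝ (Fin d)) (hx0 : x 0 = 0)
    (hdist : ∀ i ≤ N, ∀ j ≤ N, i ≠ j → x i ≠ x j) :
    ∃ x' : ℕ → EuclideanSpace ℝ (Fin d), x' 0 = 0 ∧
      (∀ i ≤ N, ∀ j ≤ N, i ≠ j → x' i ≠ x' j) ∧
      (∀ i ≤ N, ‖x' i‖ ≤ ((N : ℝ) + 2) * (2 * ((N : ℝ) + 2)) ^ N * R) ∧
      discF d s p m x' N ≤ discF d s p m x N := by
  classical
  have hs0 : 0 < s := lt_trans hp hps
  set K : ℝ := 2 * ((N : ℝ) + 2) with hKdef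
  have hK1 : (1:ℝ) ≤ K := by
    have : (0:ℝ) ≤ (N:ℝ) := Nat.cast_nonneg N
    rw [hKdef]; linarith
  have hR0 : (0:ℝ) < R := lt_of_lt_of_le one_pos hR1
  obtain ⟨k, hkN, hgap⟩ := aux_gap N K R hK1 hR0.le (fun i => ‖x i‖)
  set r : ℝ := R * K ^ k with hrdef
  have hKk1 : (1:ℝ) ≤ K ^ k := one_le_pow₀ hK1
  have hr0 : 0 < r := by positivity
  have hRr : R ≤ r := by nlinarith
  have hrB : r ≤ R * K ^ N := by
    have : K ^ k ≤ K ^ N := pow_le_pow_right₀ hK1 hkN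
    nlinarith
  have hgap' : ∀ i ∈ Finset.Icc 1 N, ‖x i‖ ≤ r ∨ K * r < ‖x i‖ := by
    intro i hi
    rcases hgap i hi with h | h
    · exact Or.inl h
    · right
      calc K * r = R * K ^ (k + 1) := by rw [hrdef]; ring
        _ < ‖x i‖ := h
  -- the modified configuration
  set x' : ℕ → EuclideanSpace ℝ (Fin d) :=
    fun i => if i ≤ N ∧ r < ‖x i‖ then ((2 + (i : ℝ)) * r) • v else x i with hx'def
  have hx'0 : x' 0 = 0 := by
    rw [hx'def]
    simp only
    rw [if_neg, hx0]
    rintro ⟨-, h⟩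
    rw [hx0] at h
    simp at h
    linarith
  -- norms of moved points
  have hmovednorm : ∀ i, (i ≤ N ∧ r < ‖x i‖) → ‖x' i‖ = (2 + (i : ℝ)) * r := by
    intro i hi
    rw [hx'def]
    simp only [if_pos hi]
    rw [norm_smul, hv, mul_one, Real.norm_eq_abs, abs_of_pos]
    have : (0:ℝ) ≤ (i:ℝ) := Nat.cast_nonneg i
    nlinarith
  have hmoved_far : ∀ i, (i ≤ N ∧ r < ‖x i‖) → K * r < ‖x i‖ := by
    intro i hi
    have hi1 : i ∈ Finset.Icc 1 N := by
      rw [Finset.mem_Icc]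
      refine ⟨?_, hi.1⟩
      by_contra h
      have h0 : i = 0 := by omega
      have h2 := hi.2
      rw [h0, hx0] at h2
      simp at h2
      linarith
    rcases hgap' i hi1 with h | h
    · linarith [hi.2]
    · exact h
  have hunmoved : ∀ i, i ≤ N → ¬(i ≤ N ∧ r < ‖x i‖) → ‖x i‖ ≤ r := by
    intro i hi h
    by_contra h2
    exact h ⟨hi, lt_of_not_ge h2⟩
  -- norm bound for x'
  have hbound : ∀ i ≤ N, ‖x' i‖ ≤ ((N : ℝ) + 2) * (2 * ((N : ℝ) + 2)) ^ N * R := by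
    intro i hi
    have hNr : (0:ℝ) ≤ (N:ℝ) := Nat.cast_nonneg N
    have h2 : ‖x' i‖ ≤ ((N:ℝ) + 2) * r := by
      by_cases hc : i ≤ N ∧ r < ‖x i‖
      · rw [hmovednorm i hc]
        have : (i:ℝ) ≤ (N:ℝ) := Nat.cast_le.mpr hi
        nlinarith
      · rw [hx'def]; simp only [if_neg hc]
        have := hunmoved i hi hc
        nlinarith
    calc ‖x' i‖ ≤ ((N:ℝ) + 2) * r := h2
      _ ≤ ((N:ℝ) + 2) * (R * K ^ N) := by nlinarith
      _ = ((N : ℝ) + 2) * (2 * ((N : ℝ) + 2)) ^ N * R := by rw [hKdef]; ring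
  -- distinctness
  have hdist' : ∀ i ≤ N, ∀ j ≤ N, i ≠ j → x' i ≠ x' j := by
    intro i hi j hj hij
    by_cases hci : i ≤ N ∧ r < ‖x i‖ <;> by_cases hcj : j ≤ N ∧ r < ‖x j‖
    · -- both moved: distinct multiples of v
      intro he
      have h1 := hmovednorm i hci
      have h2 := hmovednorm j hcj
      rw [he] at h1
      rw [h1] at h2
      have : (i:ℝ) = (j:ℝ) := by nlinarith
      exact hij (Nat.cast_injective this)
    · intro he
      have h1 := hmovednorm i hci
      have h2 := hunmoved j hj hcj
      rw [he] at h1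
      have h3 : ‖x' j‖ ≤ r := by rw [hx'def]; simp only [if_neg hcj]; exact h2
      rw [h1] at h3
      have : (0:ℝ) ≤ (i:ℝ) := Nat.cast_nonneg i
      nlinarith
    · intro he
      have h1 := hmovednorm j hcj
      have h2 := hunmoved i hi hci
      rw [← he] at h1
      have h3 : ‖x' i‖ ≤ r := by rw [hx'def]; simp only [if_neg hci]; exact h2
      rw [h1] at h3
      have : (0:ℝ) ≤ (j:ℝ) := Nat.cast_nonneg j
      nlinarith
    · rw [hx'def]; simp only [if_neg hci, if_neg hcj]
      exact hdist i hi j hj hij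
  refine ⟨x', hx'0, hdist', hbound, ?_⟩
  -- energy comparison; split on whether any point moved
  by_cases hT : ∃ i₀, i₀ ≤ N ∧ r < ‖x i₀‖
  · obtain ⟨i₀, hi₀⟩ := hT
    have hi₀1 : i₀ ∈ Finset.Icc 1 N := by
      rw [Finset.mem_Icc]
      refine ⟨?_, hi₀.1⟩
      by_contra h
      have h0 : i₀ = 0 := by omega
      have h2 := hi₀.2
      rw [h0, hx0] at h2
      simp at h2
      linarith
    set M : ℝ := ∑ i ∈ Finset.range (N + 1), m i with hMdef
    -- lower bound on new pairwise distances for pairs touching a moved point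
    have hsep : ∀ i ≤ N, ∀ j ≤ N, i ≠ j →
        ((i ≤ N ∧ r < ‖x i‖) ∨ (j ≤ N ∧ r < ‖x j‖)) → r ≤ ‖x' i - x' j‖ := by
      intro i hi j hj hij hor
      by_cases hci : i ≤ N ∧ r < ‖x i‖ <;> by_cases hcj : j ≤ N ∧ r < ‖x j‖
      · -- both moved
        have he : x' i - x' j = (((i:ℝ) - (j:ℝ)) * r) • v := by
          rw [hx'def]; simp only [if_pos hci, if_pos hcj]
          rw [← sub_smul]; congr 1; ring
        rw [he, norm_smul, hv, mul_one, Real.norm_eq_abs, abs_mul, abs_of_pos hr0]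
        have h1 : (1:ℝ) ≤ |(i:ℝ) - (j:ℝ)| := by
          rcases lt_or_gt_of_ne hij with h | h
          · have hle : (i:ℝ) + 1 ≤ (j:ℝ) := by exact_mod_cast Nat.succ_le_of_lt h
            rw [abs_sub_comm, abs_of_pos (by linarith)]
            linarith
          · have hle : (j:ℝ) + 1 ≤ (i:ℝ) := by exact_mod_cast Nat.succ_le_of_lt h
            rw [abs_of_pos (by linarith)]
            linarith
        nlinarith
      · -- i moved, j not
        have h1 := hmovednorm i hci
        have h2 : ‖x' j‖ ≤ r := by
          rw [hx'def]; simp only [if_neg hcj]; exact hunmoved j hj hcj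
        have h3 : ‖x' i‖ - ‖x' j‖ ≤ ‖x' i - x' j‖ := norm_sub_norm_le (x' i) (x' j)
        have : (0:ℝ) ≤ (i:ℝ) := Nat.cast_nonneg i
        nlinarith
      · have h1 := hmovednorm j hcj
        have h2 : ‖x' i‖ ≤ r := by
          rw [hx'def]; simp only [if_neg hci]; exact hunmoved i hi hci
        have h3 : ‖x' j‖ - ‖x' i‖ ≤ ‖x' i - x' j‖ := by
          rw [norm_sub_rev]
          exact norm_sub_norm_le (x' j) (x' i)
        have : (0:ℝ) ≤ (j:ℝ) := Nat.cast_nonneg j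
        nlinarith
      · tauto
    -- repulsion estimate
    have hrep : (∑ i ∈ Finset.range (N + 1), ∑ j ∈ Finset.range (N + 1),
          if i = j then 0 else m i * m j / ‖x' i - x' j‖ ^ s)
        ≤ (∑ i ∈ Finset.range (N + 1), ∑ j ∈ Finset.range (N + 1),
          if i = j then 0 else m i * m j / ‖x i - x j‖ ^ s) + M ^ 2 / r ^ s := by
      have key : ∀ i ∈ Finset.range (N + 1), ∀ j ∈ Finset.range (N + 1),
          (if i = j then (0:ℝ) else m i * m j / ‖x' i - x' j‖ ^ s)
            ≤ (if i = j then 0 else m i * m j / ‖x i - x j‖ ^ s) + m i * m j / r ^ s := by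
        intro i hi j hj
        rw [Finset.mem_range, Nat.lt_succ_iff] at hi hj
        have hmm : 0 < m i * m j := mul_pos (hm i) (hm j)
        have hrs : (0:ℝ) < r ^ s := Real.rpow_pos_of_pos hr0 s
        by_cases hij : i = j
        · rw [if_pos hij, if_pos hij]; positivity
        · rw [if_neg hij, if_neg hij]
          by_cases htouch : (i ≤ N ∧ r < ‖x i‖) ∨ (j ≤ N ∧ r < ‖x j‖)
          · have hd := hsep i hi j hj hij htouch
            have h1 : m i * m j / ‖x' i - x' j‖ ^ s ≤ m i * m j / r ^ s := by
              apply div_le_div_of_nonneg_left hmm.le hrs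
              exact Real.rpow_le_rpow hr0.le hd hs0.le
            have h2 : (0:ℝ) ≤ m i * m j / ‖x i - x j‖ ^ s := by
              have : (0:ℝ) ≤ ‖x i - x j‖ ^ s := Real.rpow_nonneg (norm_nonneg _) s
              positivity
            linarith
          · push_neg at htouch
            have hti : ¬(i ≤ N ∧ r < ‖x i‖) := fun h => absurd h.2 (not_lt.mpr (htouch.1 h.1))
            have htj : ¬(j ≤ N ∧ r < ‖x j‖) := fun h => absurd h.2 (not_lt.mpr (htouch.2 h.1))
            have hxi : x' i = x i := by rw [hx'def]; simp only [if_neg hti]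
            have hxj : x' j = x j := by rw [hx'def]; simp only [if_neg htj]
            rw [hxi, hxj]
            have hnn : (0:ℝ) ≤ m i * m j / r ^ s := by positivity
            linarith
      calc (∑ i ∈ Finset.range (N + 1), ∑ j ∈ Finset.range (N + 1),
            if i = j then (0:ℝ) else m i * m j / ‖x' i - x' j‖ ^ s)
          ≤ ∑ i ∈ Finset.range (N + 1), ∑ j ∈ Finset.range (N + 1),
            ((if i = j then (0:ℝ) else m i * m j / ‖x i - x j‖ ^ s) + m i * m j / r ^ s) := by
            refine Finset.sum_le_sum fun i hi => Finset.sum_le_sum fun j hj => key i hi j hj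
        _ = (∑ i ∈ Finset.range (N + 1), ∑ j ∈ Finset.range (N + 1),
              if i = j then (0:ℝ) else m i * m j / ‖x i - x j‖ ^ s) + M ^ 2 / r ^ s := by
            simp only [Finset.sum_add_distrib]
            congr 1
            have h1 : ∑ i ∈ Finset.range (N + 1), ∑ j ∈ Finset.range (N + 1),
                m i * m j / r ^ s
                = (∑ i ∈ Finset.range (N + 1), ∑ j ∈ Finset.range (N + 1), m i * m j)
                    / r ^ s := by
              simp only [Finset.sum_div]
            have h2 : (∑ i ∈ Finset.range (N + 1), ∑ j ∈ Finset.range (N + 1), m i * m j)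
                = M * M := (Finset.sum_mul_sum _ _ _ _).symm
            rw [h1, h2, ← pow_two]
    -- attraction estimate
    set gain : ℝ := μ * (1 / (((N:ℝ) + 2) * r) ^ p - 1 / (K * r) ^ p) with hgain
    have hatt : (∑ kk ∈ Finset.Icc 1 N, m kk / ‖x kk‖ ^ p) + gain
        ≤ ∑ kk ∈ Finset.Icc 1 N, m kk / ‖x' kk‖ ^ p := by
      have hN0 : (0:ℝ) ≤ (N:ℝ) := Nat.cast_nonneg N
      have hpt : ∀ kk ∈ Finset.Icc 1 N,
          m kk / ‖x kk‖ ^ p + (if kk = i₀ then gain else 0) ≤ m kk / ‖x' kk‖ ^ p := by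
        intro kk hkk
        rw [Finset.mem_Icc] at hkk
        have hkk0 : (0:ℝ) ≤ (kk:ℝ) := Nat.cast_nonneg kk
        by_cases hc : kk ≤ N ∧ r < ‖x kk‖
        · have hnorm := hmovednorm kk hc
          have hfar := hmoved_far kk hc
          have hkkN : (kk:ℝ) ≤ (N:ℝ) := Nat.cast_le.mpr hkk.2
          have b0 : (0:ℝ) < ((2:ℝ) + (kk:ℝ)) * r := by nlinarith
          have b1 : (0:ℝ) < ((N:ℝ) + 2) * r := by nlinarith
          have b2 : (0:ℝ) < K * r := by nlinarith
          have e1 : ((2:ℝ) + (kk:ℝ)) * r ≤ ((N:ℝ) + 2) * r := by nlinarith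
          have e2 : ((N:ℝ) + 2) * r ≤ K * r := by rw [hKdef]; nlinarith
          have hxn : (0:ℝ) < ‖x kk‖ := lt_trans b2 hfar
          have r1 : m kk / ‖x kk‖ ^ p ≤ m kk / (K * r) ^ p :=
            div_le_div_of_nonneg_left (hm kk).le (Real.rpow_pos_of_pos b2 p)
              (Real.rpow_le_rpow b2.le hfar.le hp.le)
          have r2 : m kk / (((N:ℝ) + 2) * r) ^ p ≤ m kk / (((2:ℝ) + (kk:ℝ)) * r) ^ p :=
            div_le_div_of_nonneg_left (hm kk).le (Real.rpow_pos_of_pos b0 p)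
              (Real.rpow_le_rpow b0.le e1 hp.le)
          rw [hnorm]
          by_cases he : kk = i₀
          · rw [if_pos he]
            have h3 : (0:ℝ) ≤ 1 / (((N:ℝ) + 2) * r) ^ p - 1 / (K * r) ^ p := by
              have hle : (((N:ℝ) + 2) * r) ^ p ≤ (K * r) ^ p :=
                Real.rpow_le_rpow b1.le e2 hp.le
              have p1 : (0:ℝ) < (((N:ℝ) + 2) * r) ^ p := Real.rpow_pos_of_pos b1 p
              have := one_div_le_one_div_of_le p1 hle
              linarith
            have h4 : μ ≤ m kk := hμ kk hc.1
            have h5 : (0:ℝ) ≤ (m kk - μ) * (1 / (((N:ℝ) + 2) * r) ^ p - 1 / (K * r) ^ p) :=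
              mul_nonneg (by linarith) h3
            have e3 : m kk / (K * r) ^ p = m kk * (1 / (K * r) ^ p) := by ring
            have e4 : m kk / (((N:ℝ) + 2) * r) ^ p
                = m kk * (1 / (((N:ℝ) + 2) * r) ^ p) := by ring
            rw [hgain]
            nlinarith [r1, r2, h5]
          · rw [if_neg he, add_zero]
            exact div_le_div_of_nonneg_left (hm kk).le (Real.rpow_pos_of_pos b0 p)
              (Real.rpow_le_rpow b0.le (by linarith) hp.le)
        · have he : kk ≠ i₀ := by rintro rfl; exact hc hi₀
          rw [if_neg he, add_zero, hx'def]
          simp only [if_neg hc]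
          exact le_rfl
      have hsum := Finset.sum_le_sum hpt
      rw [Finset.sum_add_distrib, Finset.sum_ite_eq' (Finset.Icc 1 N) i₀ (fun _ => gain),
        if_pos hi₀1] at hsum
      exact hsum
    have hgain' : M ^ 2 / r ^ s ≤ gain := by
      rw [hgain, hKdef]
      exact hBig r hRr
    unfold discF
    linarith [hrep, hatt, hgain']
  · push_neg at hT
    have hxeq : x' = x := by
      funext i
      rw [hx'def]
      simp only
      rw [if_neg]
      rintro ⟨h1, h2⟩
      exact absurd h2 (not_lt.mpr (hT i h1))
    rw [hxeq]

set_option maxHeartbeats 2000000 in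
/-- The discrete interaction energy attains its infimum over the admissible class
`Σ_N = {(y₀,…,y_N) : y₀ = 0, yᵢ pairwise distinct}`. -/
theorem stmt9 (d N : ℕ) (s p : ℝ) (hd : 2 ≤ d) (hp0 : 0 < p) (hps : p < s) (hsd : s < d)
    (hN : 1 ≤ N) (m : ℕ → ℝ) (hm : ∀ i, 0 < m i) :
    ∃ y : ℕ → EuclideanSpace ℝ (Fin d), y 0 = 0 ∧
      (∀ i ≤ N, ∀ j ≤ N, i ≠ j → y i ≠ y j) ∧
      ∀ y' : ℕ → EuclideanSpace ℝ (Fin d), y' 0 = 0 →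
        (∀ i ≤ N, ∀ j ≤ N, i ≠ j → y' i ≠ y' j) →
        discF d s p m y N ≤ discF d s p m y' N := by
  classical
  have hs0 : 0 < s := lt_trans hp0 hps
  have hN0 : (0:ℝ) ≤ (N:ℝ) := Nat.cast_nonneg N
  -- a unit vector
  obtain ⟨v, hv⟩ : ∃ v : EuclideanSpace ℝ (Fin d), ‖v‖ = 1 := by
    refine ⟨EuclideanSpace.single ⟨0, by omega⟩ (1:ℝ), ?_⟩
    rw [EuclideanSpace.norm_single]; norm_num
  -- mass bounds
  obtain ⟨i₁, -, hi₁⟩ := Finset.exists_min_image (Finset.range (N + 1)) m ⟨0, by simp⟩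
  set μ : ℝ := m i₁ with hμdef
  have hμ0 : 0 < μ := hm i₁
  have hμ : ∀ i, i ≤ N → μ ≤ m i := fun i hi =>
    hi₁ i (Finset.mem_range.mpr (Nat.lt_succ_of_le hi))
  set M : ℝ := ∑ i ∈ Finset.range (N + 1), m i with hMdef
  -- the constant `c` for the escape estimate
  set c : ℝ := 1 / ((N:ℝ) + 2) ^ p - 1 / (2 * ((N:ℝ) + 2)) ^ p with hcdef
  have hb1 : (0:ℝ) < (N:ℝ) + 2 := by linarith
  have hb2 : (0:ℝ) < 2 * ((N:ℝ) + 2) := by linarith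
  have hc0 : 0 < c := by
    rw [hcdef]
    have h1 : ((N:ℝ) + 2) ^ p < (2 * ((N:ℝ) + 2)) ^ p :=
      Real.rpow_lt_rpow hb1.le (by linarith) hp0
    have h2 : (0:ℝ) < ((N:ℝ) + 2) ^ p := Real.rpow_pos_of_pos hb1 p
    have h3 : (0:ℝ) < (2 * ((N:ℝ) + 2)) ^ p := Real.rpow_pos_of_pos hb2 p
    have := one_div_lt_one_div_of_lt h2 h1
    linarith
  obtain ⟨R, hR1, hRbig⟩ := aux_chooseR s p M μ c hp0 hps hμ0 hc0
  have hR0 : (0:ℝ) < R := lt_of_lt_of_le one_pos hR1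
  -- the big-radius hypothesis of the repair lemma
  have hBig : ∀ r : ℝ, R ≤ r →
      M ^ 2 / r ^ s ≤ μ * (1 / (((N : ℝ) + 2) * r) ^ p - 1 / ((2 * ((N : ℝ) + 2)) * r) ^ p) := by
    intro r hr
    have hr0 : (0:ℝ) < r := lt_of_lt_of_le hR0 hr
    have hrp : (0:ℝ) < r ^ p := Real.rpow_pos_of_pos hr0 p
    have hrs : (0:ℝ) < r ^ s := Real.rpow_pos_of_pos hr0 s
    have e1 : (((N : ℝ) + 2) * r) ^ p = ((N:ℝ) + 2) ^ p * r ^ p :=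
      Real.mul_rpow hb1.le hr0.le
    have e2 : ((2 * ((N : ℝ) + 2)) * r) ^ p = (2 * ((N:ℝ) + 2)) ^ p * r ^ p :=
      Real.mul_rpow hb2.le hr0.le
    have h2 : (0:ℝ) < ((N:ℝ) + 2) ^ p := Real.rpow_pos_of_pos hb1 p
    have h3 : (0:ℝ) < (2 * ((N:ℝ) + 2)) ^ p := Real.rpow_pos_of_pos hb2 p
    have key : M ^ 2 ≤ μ * c * r ^ (s - p) := hRbig r hr
    have hsplit : r ^ s = r ^ p * r ^ (s - p) := by
      rw [← Real.rpow_add hr0]; congr 1; ring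
    rw [e1, e2]
    have erhs : μ * (1 / (((N:ℝ) + 2) ^ p * r ^ p) - 1 / ((2 * ((N:ℝ) + 2)) ^ p * r ^ p))
        = μ * c / r ^ p := by
      rw [hcdef]; field_simp
    rw [erhs, div_le_div_iff₀ hrs hrp, hsplit]
    calc M ^ 2 * r ^ p ≤ (μ * c * r ^ (s - p)) * r ^ p := by nlinarith
      _ = μ * c * (r ^ p * r ^ (s - p)) := by ring
  -- bound for repaired configurations
  set Rb : ℝ := ((N : ℝ) + 2) * (2 * ((N : ℝ) + 2)) ^ N * R with hRbdef
  have hRb0 : (0:ℝ) < Rb := by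
    rw [hRbdef]; positivity
  have hRbN : (N:ℝ) ≤ Rb := by
    rw [hRbdef]
    have h1 : (1:ℝ) ≤ (2 * ((N:ℝ) + 2)) ^ N := one_le_pow₀ (by linarith)
    have h2 : ((N:ℝ) + 2) ≤ ((N:ℝ) + 2) * (2 * ((N:ℝ) + 2)) ^ N :=
      le_mul_of_one_le_right (by linarith) h1
    have h3 : ((N:ℝ) + 2) * (2 * ((N:ℝ) + 2)) ^ N
        ≤ ((N:ℝ) + 2) * (2 * ((N:ℝ) + 2)) ^ N * R :=
      le_mul_of_one_le_right (by positivity) hR1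
    linarith
  -- lower bound constant C₀
  have hB : ∀ kk : ℕ, ∃ B : ℝ, 0 ≤ B ∧ ∀ r : ℝ, 0 < r →
      -B ≤ (m 0 * m kk) / r ^ s - m kk / r ^ p := fun kk =>
    aux_pow_lb s p (m 0 * m kk) (m kk) hp0 hps (mul_pos (hm 0) (hm kk)) (hm kk)
  choose B hB0 hB1 using hB
  set C₀ : ℝ := ∑ kk ∈ Finset.Icc 1 N, B kk with hC₀def
  have hC₀0 : 0 ≤ C₀ := Finset.sum_nonneg fun kk _ => hB0 kk
  have hsumlb : ∀ x : ℕ → EuclideanSpace ℝ (Fin d), (∀ kk ∈ Finset.Icc 1 N, 0 < ‖x kk‖) →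
      -C₀ ≤ ∑ kk ∈ Finset.Icc 1 N, (m 0 * m kk / ‖x kk‖ ^ s - m kk / ‖x kk‖ ^ p) := by
    intro x hx
    rw [hC₀def, ← Finset.sum_neg_distrib]
    exact Finset.sum_le_sum fun kk hkk => hB1 kk (‖x kk‖) (hx kk hkk)
  -- reference configuration
  set x₀ : ℕ → EuclideanSpace ℝ (Fin d) :=
    fun i => if i ≤ N then ((i : ℝ)) • v else 0 with hx₀def
  have hx₀norm : ∀ i ≤ N, ‖x₀ i‖ = (i : ℝ) := by
    intro i hi
    rw [hx₀def]
    simp only [if_pos hi]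
    rw [norm_smul, hv, mul_one, Real.norm_eq_abs, abs_of_nonneg (Nat.cast_nonneg i)]
  have hx₀0 : x₀ 0 = 0 := by
    rw [hx₀def]; simp
  have hx₀sub : ∀ i ≤ N, ∀ j ≤ N, ‖x₀ i - x₀ j‖ = |(i:ℝ) - (j:ℝ)| := by
    intro i hi j hj
    rw [hx₀def]
    simp only [if_pos hi, if_pos hj]
    rw [← sub_smul, norm_smul, hv, mul_one, Real.norm_eq_abs]
  have habs1 : ∀ i j : ℕ, i ≠ j → (1:ℝ) ≤ |(i:ℝ) - (j:ℝ)| := by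
    intro i j hij
    rcases lt_or_gt_of_ne hij with h | h
    · have hle : (i:ℝ) + 1 ≤ (j:ℝ) := by exact_mod_cast Nat.succ_le_of_lt h
      rw [abs_sub_comm, abs_of_pos (by linarith)]; linarith
    · have hle : (j:ℝ) + 1 ≤ (i:ℝ) := by exact_mod_cast Nat.succ_le_of_lt h
      rw [abs_of_pos (by linarith)]; linarith
  have hx₀dist : ∀ i ≤ N, ∀ j ≤ N, i ≠ j → x₀ i ≠ x₀ j := by
    intro i hi j hj hij he
    have h1 := hx₀sub i hi j hj
    rw [he, sub_self, norm_zero] at h1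
    have := habs1 i j hij
    linarith [this, h1.symm ▸ this]
  set E₀ : ℝ := discF d s p m x₀ N with hE₀def
  -- the separation constant δ
  set D : ℝ := |E₀| + C₀ + 1 with hDdef
  have hD0 : 0 < D := by positivity
  set δ : ℝ := min 1 ((μ ^ 2 / D) ^ s⁻¹) with hδdef
  have hδbase : (0:ℝ) < (μ ^ 2 / D) ^ s⁻¹ := Real.rpow_pos_of_pos (by positivity) _
  have hδ0 : 0 < δ := lt_min one_pos hδbase
  have hδ1 : δ ≤ 1 := min_le_left _ _
  have hδs : δ ^ s ≤ μ ^ 2 / D := by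
    calc δ ^ s ≤ ((μ ^ 2 / D) ^ s⁻¹) ^ s :=
          Real.rpow_le_rpow hδ0.le (min_le_right _ _) hs0.le
      _ = μ ^ 2 / D := Real.rpow_inv_rpow (by positivity) hs0.ne'
  -- the compact admissible set
  set S : Set (ℕ → EuclideanSpace ℝ (Fin d)) :=
    {y | y 0 = 0 ∧ (∀ i, i ≤ N → ‖y i‖ ≤ Rb) ∧
      (∀ i, i ≤ N → ∀ j, j ≤ N → i ≠ j → δ ≤ ‖y i - y j‖) ∧
      (∀ i, N < i → y i = 0)} with hSdef
  have hx₀S : x₀ ∈ S := by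
    refine ⟨hx₀0, ?_, ?_, ?_⟩
    · intro i hi
      rw [hx₀norm i hi]
      calc (i:ℝ) ≤ (N:ℝ) := Nat.cast_le.mpr hi
        _ ≤ Rb := hRbN
    · intro i hi j hj hij
      rw [hx₀sub i hi j hj]
      exact le_trans hδ1 (habs1 i j hij)
    · intro i hi
      rw [hx₀def]; simp only [if_neg (by omega : ¬ i ≤ N)]
  -- S is compact
  have hSclosed : IsClosed S := by
    have h1 : IsClosed {y : ℕ → EuclideanSpace ℝ (Fin d) | y 0 = 0} :=
      isClosed_eq (continuous_apply 0) continuous_const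
    have h2 : IsClosed {y : ℕ → EuclideanSpace ℝ (Fin d) | ∀ i, i ≤ N → ‖y i‖ ≤ Rb} := by
      have : {y : ℕ → EuclideanSpace ℝ (Fin d) | ∀ i, i ≤ N → ‖y i‖ ≤ Rb}
          = ⋂ i, ⋂ (_ : i ≤ N), {y | ‖y i‖ ≤ Rb} := by
        ext y; simp [Set.mem_iInter]
      rw [this]
      exact isClosed_iInter fun i => isClosed_iInter fun _ =>
        isClosed_le ((continuous_apply i).norm) continuous_const
    have h3 : IsClosed {y : ℕ → EuclideanSpace ℝ (Fin d) |
        ∀ i, i ≤ N → ∀ j, j ≤ N → i ≠ j → δ ≤ ‖y i - y j‖} := by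
      have : {y : ℕ → EuclideanSpace ℝ (Fin d) |
          ∀ i, i ≤ N → ∀ j, j ≤ N → i ≠ j → δ ≤ ‖y i - y j‖}
          = ⋂ i, ⋂ (_ : i ≤ N), ⋂ j, ⋂ (_ : j ≤ N), ⋂ (_ : i ≠ j), {y | δ ≤ ‖y i - y j‖} := by
        ext y; simp [Set.mem_iInter]
      rw [this]
      exact isClosed_iInter fun i => isClosed_iInter fun _ => isClosed_iInter fun j =>
        isClosed_iInter fun _ => isClosed_iInter fun _ =>
          isClosed_le continuous_const (((continuous_apply i).sub (continuous_apply j)).norm)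
    have h4 : IsClosed {y : ℕ → EuclideanSpace ℝ (Fin d) | ∀ i, N < i → y i = 0} := by
      have : {y : ℕ → EuclideanSpace ℝ (Fin d) | ∀ i, N < i → y i = 0}
          = ⋂ i, ⋂ (_ : N < i), {y | y i = 0} := by
        ext y; simp [Set.mem_iInter]
      rw [this]
      exact isClosed_iInter fun i => isClosed_iInter fun _ =>
        isClosed_eq (continuous_apply i) continuous_const
    have : S = {y : ℕ → EuclideanSpace ℝ (Fin d) | y 0 = 0}
        ∩ ({y | ∀ i, i ≤ N → ‖y i‖ ≤ Rb}
        ∩ ({y | ∀ i, i ≤ N → ∀ j, j ≤ N → i ≠ j → δ ≤ ‖y i - y j‖}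
        ∩ {y | ∀ i, N < i → y i = 0})) := rfl
    rw [this]
    exact h1.inter (h2.inter (h3.inter h4))
  have hScompact : IsCompact S := by
    apply IsCompact.of_isClosed_subset
      (isCompact_univ_pi fun _ : ℕ => isCompact_closedBall (0 : EuclideanSpace ℝ (Fin d)) Rb)
      hSclosed
    intro y hy
    rw [Set.mem_univ_pi]
    intro i
    rw [Metric.mem_closedBall, dist_zero_right]
    by_cases hi : i ≤ N
    · exact hy.2.1 i hi
    · rw [hy.2.2.2 i (by omega), norm_zero]; exact hRb0.le
  -- continuity of discF on S
  have hcont : ContinuousOn (fun y => discF d s p m y N) S := by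
    unfold discF
    apply ContinuousOn.sub
    · apply continuousOn_finset_sum
      intro i hi
      apply continuousOn_finset_sum
      intro j hj
      rw [Finset.mem_range, Nat.lt_succ_iff] at hi hj
      by_cases hij : i = j
      · simp only [if_pos hij]
        exact continuousOn_const
      · simp only [if_neg hij]
        apply ContinuousOn.div continuousOn_const
        · apply ContinuousOn.rpow_const
          · exact (((continuous_apply i).sub (continuous_apply j)).norm).continuousOn
          · intro y hy
            exact Or.inr hs0.le
        · intro y hy
          have hd1 : δ ≤ ‖y i - y j‖ := hy.2.2.1 i hi j hj hij
          exact ne_of_gt (Real.rpow_pos_of_pos (lt_of_lt_of_le hδ0 hd1) s)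
    · apply continuousOn_finset_sum
      intro kk hkk
      rw [Finset.mem_Icc] at hkk
      apply ContinuousOn.div continuousOn_const
      · apply ContinuousOn.rpow_const
        · exact ((continuous_apply kk).norm).continuousOn
        · intro y hy
          exact Or.inr hp0.le
      · intro y hy
        have h0 : y 0 = 0 := hy.1
        have hd1 : δ ≤ ‖y kk - y 0‖ := hy.2.2.1 kk hkk.2 0 (by omega) (by omega)
        rw [h0, sub_zero] at hd1
        exact ne_of_gt (Real.rpow_pos_of_pos (lt_of_lt_of_le hδ0 hd1) p)
  -- the minimizer on S
  obtain ⟨ystar, hyS, hymin⟩ := hScompact.exists_isMinOn ⟨x₀, hx₀S⟩ hcont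
  refine ⟨ystar, hyS.1, ?_, ?_⟩
  · intro i hi j hj hij he
    have := hyS.2.2.1 i hi j hj hij
    rw [he, sub_self, norm_zero] at this
    linarith
  · intro y' hy'0 hy'dist
    -- repair y'
    obtain ⟨x', hx'0, hx'dist, hx'bound, hx'le⟩ :=
      aux_repair d N s p m hp0 hps hm v hv μ hμ0 hμ R hR1 hBig y' hy'0 hy'dist
    -- truncate beyond N
    set x'' : ℕ → EuclideanSpace ℝ (Fin d) := fun i => if i ≤ N then x' i else 0 with hx''def
    have hx''eq : ∀ i ≤ N, x'' i = x' i := by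
      intro i hi; rw [hx''def]; simp only [if_pos hi]
    have hx''F : discF d s p m x'' N = discF d s p m x' N :=
      discF_congr d N s p m x'' x' hx''eq
    have hx''0 : x'' 0 = 0 := by rw [hx''eq 0 (by omega), hx'0]
    have hx''dist : ∀ i ≤ N, ∀ j ≤ N, i ≠ j → x'' i ≠ x'' j := by
      intro i hi j hj hij
      rw [hx''eq i hi, hx''eq j hj]
      exact hx'dist i hi j hj hij
    by_cases hsep : ∀ i, i ≤ N → ∀ j, j ≤ N → i ≠ j → δ ≤ ‖x'' i - x'' j‖
    · have hx''S : x'' ∈ S := by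
        refine ⟨hx''0, ?_, hsep, ?_⟩
        · intro i hi; rw [hx''eq i hi]; exact hx'bound i hi
        · intro i hi; rw [hx''def]; simp only [if_neg (by omega : ¬ i ≤ N)]
      calc discF d s p m ystar N ≤ discF d s p m x'' N := hymin hx''S
        _ = discF d s p m x' N := hx''F
        _ ≤ discF d s p m y' N := hx'le
    · push_neg at hsep
      obtain ⟨i, hi, j, hj, hij, hclose⟩ := hsep
      -- collision lower bound: discF x'' is large
      have hne : x'' i ≠ x'' j := hx''dist i hi j hj hij
      have hdpos : 0 < ‖x'' i - x'' j‖ := by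
        rw [norm_pos_iff, sub_ne_zero]; exact hne
      have hnormpos : ∀ kk ∈ Finset.Icc 1 N, 0 < ‖x'' kk‖ := by
        intro kk hkk
        rw [Finset.mem_Icc] at hkk
        have : x'' kk ≠ x'' 0 := hx''dist kk hkk.2 0 (by omega) (by omega)
        rw [hx''0] at this
        rw [norm_pos_iff]
        exact this
      have hge := discF_ge d N s p m hm x'' hx''0 i j hi hj hij
      have hlb := hsumlb x'' hnormpos
      have hds : (0:ℝ) < ‖x'' i - x'' j‖ ^ s := Real.rpow_pos_of_pos hdpos s
      have hδsp : (0:ℝ) < δ ^ s := Real.rpow_pos_of_pos hδ0 s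
      have hmono : ‖x'' i - x'' j‖ ^ s ≤ δ ^ s :=
        Real.rpow_le_rpow hdpos.le hclose.le hs0.le
      have hstep1 : μ ^ 2 / δ ^ s ≤ μ ^ 2 / ‖x'' i - x'' j‖ ^ s :=
        div_le_div_of_nonneg_left (by positivity) hds hmono
      have hstep2 : μ ^ 2 / ‖x'' i - x'' j‖ ^ s ≤ m i * m j / ‖x'' i - x'' j‖ ^ s := by
        gcongr
        nlinarith [hμ i hi, hμ j hj, hμ0]
      have hstep3 : D ≤ μ ^ 2 / δ ^ s := by
        have h1 : δ ^ s ≤ μ ^ 2 / D := hδs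
        have h2 : μ ^ 2 / (μ ^ 2 / D) ≤ μ ^ 2 / δ ^ s :=
          div_le_div_of_nonneg_left (by positivity) hδsp h1
        have h3 : μ ^ 2 / (μ ^ 2 / D) = D := by
          field_simp
        linarith
      have hE₀S : discF d s p m ystar N ≤ E₀ := hymin hx₀S
      have hfinal : E₀ < discF d s p m x'' N := by
        have habs : E₀ ≤ |E₀| := le_abs_self E₀
        have : D - C₀ ≤ m i * m j / ‖x'' i - x'' j‖ ^ s
            + ∑ kk ∈ Finset.Icc 1 N, (m 0 * m kk / ‖x'' kk‖ ^ s - m kk / ‖x'' kk‖ ^ p) := by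
          linarith
        rw [hDdef] at this
        linarith
      calc discF d s p m ystar N ≤ E₀ := hE₀S
        _ ≤ discF d s p m x'' N := le_of_lt hfinal
        _ = discF d s p m x' N := hx''F
        _ ≤ discF d s p m y' N := hx'le
end

section
/- Let $f : (0,\infty) \to \mathbb{R}$ be strictly concave on an interval $(0, \bar m)$ with $f(m) \to 0$ as $m \to 0^+$, and suppose $(m^1, \dots, m^k)$ with $m^i > 0$ and $\sum m^i = M$ minimizes $\sum_{i=1}^k f(m^i)$ among all such decompositions of $M$ into $k$ positive parts. Then at most one of the $m^i$ lies in the open interval $(0, \bar m)$. -/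
open MeasureTheory Set Filter Finset
open scoped Topology

lemma sum_update2' {n : ℕ} (g : Fin n → ℝ) (p q : Fin n) (hpq : p ≠ q) (u v : ℝ) :
    ∑ l, Function.update (Function.update g p u) q v l
      = ∑ l, g l - g p - g q + u + v := by
  rw [Finset.sum_update_of_mem (Finset.mem_univ q)]
  rw [Finset.sum_update_of_mem (by simp [hpq] : p ∈ Finset.univ \ {q})]
  rw [show (Finset.univ \ {q} : Finset (Fin n)) \ {p} = Finset.univ \ ({p, q} : Finset (Fin n)) by
    ext l; simp; tauto]
  have h1 : ∑ l, g l = g p + g q + ∑ l ∈ Finset.univ \ ({p, q} : Finset (Fin n)), g l := by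
    rw [Finset.sum_sdiff_eq_sub (Finset.subset_univ _), Finset.sum_pair hpq]; ring
  rw [h1]; ring

/-- Abstract concavity argument: if `f` is strictly concave on `(0, m̄)` with `f → 0` at `0⁺`,
and `(m¹, …, mᵏ)` is an optimal decomposition of `M` into `k` positive masses minimizing
`∑ f(mⁱ)`, then at most one of the masses lies in `(0, m̄)`. -/
theorem stmt12 (f : ℝ → ℝ) (mb M : ℝ) (hmb : 0 < mb) (hM : 0 < M)
    (hconc : StrictConcaveOn ℝ (Set.Ioo 0 mb) f)
    (hf0 : Tendsto f (𝓝[>] (0 : ℝ)) (𝓝 0))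
    (k : ℕ) (hk : 1 ≤ k) (m : Fin k → ℝ) (hm : ∀ i, 0 < m i) (hsum : ∑ i, m i = M)
    (hmin : ∀ m' : Fin k → ℝ, (∀ i, 0 < m' i) → ∑ i, m' i = M →
      ∑ i, f (m i) ≤ ∑ i, f (m' i)) :
    ∀ i j, m i ∈ Set.Ioo 0 mb → m j ∈ Set.Ioo 0 mb → i = j := by
  have key : ∀ p q : Fin k, p ≠ q → m p ∈ Set.Ioo 0 mb → m q ∈ Set.Ioo 0 mb →
      m p ≤ m q → False := by
    intro p q hpq hp hq hle
    set a := m p with ha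
    set b := m q with hb
    set δ : ℝ := min a (mb - b) / 2 with hδdef
    have hδ : 0 < δ := by
      have h1 : 0 < min a (mb - b) := lt_min hp.1 (by linarith [hq.2])
      positivity
    have hδa : δ < a := by
      have : min a (mb - b) ≤ a := min_le_left _ _
      linarith
    have hδb : b + δ < mb := by
      have : min a (mb - b) ≤ mb - b := min_le_right _ _
      linarith
    set x : ℝ := a - δ with hxdef
    set y : ℝ := b + δ with hydef
    have hx : x ∈ Set.Ioo 0 mb := ⟨by linarith, by linarith [hp.2]⟩
    have hy : y ∈ Set.Ioo 0 mb := ⟨by linarith [hq.1], hδb⟩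
    have hxy : x < y := by linarith
    set d : ℝ := y - x with hddef
    have hd : 0 < d := by linarith
    have hya : 0 < y - a := by simp only [hydef]; linarith
    have hbx : 0 < b - x := by simp only [hxdef]; linarith
    have e1 : (y - a)/d + δ/d = 1 := by
      rw [← add_div, show y - a + δ = d by simp only [hddef, hxdef]; ring,
        div_self hd.ne']
    have e2 : δ/d + (b - x)/d = 1 := by
      rw [← add_div, show δ + (b - x) = d by simp only [hddef, hydef]; ring,
        div_self hd.ne']
    have h1 : ((y - a)/d) • f x + (δ/d) • f y < f (((y - a)/d) • x + (δ/d) • y) :=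
      hconc.2 hx hy (ne_of_lt hxy) (div_pos hya hd) (div_pos hδ hd) e1
    have hca : ((y - a)/d) • x + (δ/d) • y = a := by
      simp only [smul_eq_mul]
      field_simp
      simp only [hddef, hxdef, hydef]
      ring
    have h2 : (δ/d) • f x + ((b - x)/d) • f y < f ((δ/d) • x + ((b - x)/d) • y) :=
      hconc.2 hx hy (ne_of_lt hxy) (div_pos hδ hd) (div_pos hbx hd) e2
    have hcb : (δ/d) • x + ((b - x)/d) • y = b := by
      simp only [smul_eq_mul]
      field_simp
      simp only [hddef, hxdef, hydef]
      ring
    rw [hca] at h1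
    rw [hcb] at h2
    have hkey : f x + f y < f a + f b := by
      have hadd := add_lt_add h1 h2
      simp only [smul_eq_mul] at hadd
      have expand : (y - a)/d * f x + δ/d * f y + (δ/d * f x + (b - x)/d * f y)
          = ((y - a)/d + δ/d) * f x + (δ/d + (b - x)/d) * f y := by ring
      rw [expand, e1, e2, one_mul, one_mul] at hadd
      exact hadd
    set m' : Fin k → ℝ := Function.update (Function.update m p x) q y with hm'
    have hval : ∀ l, m' l = if l = q then y else if l = p then x else m l := by
      intro l; simp [hm', Function.update_apply]
    have hpos : ∀ l, 0 < m' l := by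
      intro l
      rw [hval l]
      split_ifs
      exacts [hy.1, hx.1, hm l]
    have hsum' : ∑ l, m' l = M := by
      rw [hm', sum_update2' m p q hpq x y]
      simp only [← ha, ← hb, hxdef, hydef]
      linarith [hsum]
    have hlt : ∑ l, f (m' l) < ∑ l, f (m l) := by
      have hfval : ∀ l, f (m' l)
          = Function.update (Function.update (f ∘ m) p (f x)) q (f y) l := by
        intro l
        rw [hval l]
        simp only [Function.update_apply, Function.comp_apply]
        split_ifs <;> rfl
      rw [Finset.sum_congr rfl (fun l _ => hfval l), sum_update2' (f ∘ m) p q hpq]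
      simp only [Function.comp_apply, ← ha, ← hb]
      linarith [hkey]
    exact absurd (hmin m' hpos hsum') (not_le.mpr hlt)
  intro i j hi hj
  by_contra hij
  rcases le_total (m i) (m j) with h | h
  · exact key i j hij hi hj h
  · exact key j i (Ne.symm hij) hj hi h
end

section
/- Fix $d \geq 2$, $0 < p < s < d$, $N \geq 1$, masses $m^0,\dots,m^N > 0$, $0 \leq k \leq N-1$, and fixed distinct points $a_0 = 0, a_1, \dots, a_k \in \mathbb{R}^d$ contained in $B_{R_0}(0)$. Let $y_1, \dots, y_{N-k}$ be distinct unit vectors. Then for all sufficiently large $R > 2R_0$, $\mathbf{F}_N(0, a_1, \dots, a_k, Ry_1, \dots, Ry_{N-k}) < \mathbf{F}_k(0, a_1, \dots, a_k)$, where $\mathbf{F}_j$ denotes the discrete energy $\sum_{i \neq l} \frac{m^i m^l}{|x_i - x_l|^s} - \sum_{i \geq 1} \frac{m^i}{|x_i|^p}$ over the respective $j+1$ points with masses $(m^0,\dots,m^j)$ and $(m^0,\dots,m^k)$ respectively. -/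
open MeasureTheory Metric Set Filter Finset
open scoped ENNReal Topology

/-- Sending `N - k` additional points to distinct directions on a large sphere of radius `R`
strictly lowers the discrete energy below that of the fixed `k + 1` points:
`𝐅_N(0, a₁, …, a_k, R y₁, …, R y_{N-k}) < 𝐅_k(0, a₁, …, a_k)` for all sufficiently
large `R > 2 R₀`. -/
theorem stmt17 (d N k : ℕ) (s p R0 : ℝ) (hd : 2 ≤ d) (hp0 : 0 < p) (hps : p < s)
    (hsd : s < d) (hN : 1 ≤ N) (hk : k ≤ N - 1) (hR0 : 0 < R0)
    (m : ℕ → ℝ) (hm : ∀ i, 0 < m i)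
    (a : ℕ → EuclideanSpace ℝ (Fin d)) (ha0 : a 0 = 0)
    (haball : ∀ i ≤ k, a i ∈ ball (0 : EuclideanSpace ℝ (Fin d)) R0)
    (hadist : ∀ i ≤ k, ∀ j ≤ k, i ≠ j → a i ≠ a j)
    (y : ℕ → EuclideanSpace ℝ (Fin d))
    (hy : ∀ i, 1 ≤ i → i ≤ N - k → ‖y i‖ = 1)
    (hydist : ∀ i j, 1 ≤ i → i ≤ N - k → 1 ≤ j → j ≤ N - k → i ≠ j → y i ≠ y j) :
    ∃ R1, 2 * R0 < R1 ∧ ∀ R ≥ R1,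
      discF d s p m (fun i => if i ≤ k then a i else R • y (i - k)) N
        < discF d s p m a k := by
  classical
  have hkN : k + 1 ≤ N := by omega
  have hs0 : (0:ℝ) < s := lt_trans hp0 hps
  -- a uniform lower bound for distances between distinct unit vectors
  obtain ⟨d0, hd0pos, hd0half, hd0⟩ :
      ∃ δ : ℝ, 0 < δ ∧ δ ≤ 1/2 ∧ ∀ i j, 1 ≤ i → i ≤ N - k → 1 ≤ j → j ≤ N - k →
        i ≠ j → δ ≤ ‖y i - y j‖ := by
    set S := ((Finset.Icc 1 (N-k)) ×ˢ (Finset.Icc 1 (N-k))).filter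
      (fun q : ℕ × ℕ => q.1 ≠ q.2) with hS
    have hmemS : ∀ i j, 1 ≤ i → i ≤ N - k → 1 ≤ j → j ≤ N - k → i ≠ j →
        (i, j) ∈ S := by
      intro i j hi1 hi2 hj1 hj2 hij
      rw [hS, Finset.mem_filter]
      exact ⟨Finset.mem_product.mpr ⟨Finset.mem_Icc.mpr ⟨hi1, hi2⟩,
        Finset.mem_Icc.mpr ⟨hj1, hj2⟩⟩, hij⟩
    rcases S.eq_empty_or_nonempty with h | h
    · refine ⟨1/2, by norm_num, le_refl _, ?_⟩
      intro i j hi1 hi2 hj1 hj2 hij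
      exfalso
      have hmem := hmemS i j hi1 hi2 hj1 hj2 hij
      rw [h] at hmem
      simp at hmem
    · have hpos : 0 < S.inf' h (fun q => ‖y q.1 - y q.2‖) := by
        rw [Finset.lt_inf'_iff]
        intro q hq
        rw [hS, Finset.mem_filter, Finset.mem_product, Finset.mem_Icc,
          Finset.mem_Icc] at hq
        have hne := hydist q.1 q.2 hq.1.1.1 hq.1.1.2 hq.1.2.1 hq.1.2.2 hq.2
        exact norm_sub_pos_iff.mpr hne
      refine ⟨min (S.inf' h (fun q => ‖y q.1 - y q.2‖)) (1/2),
        lt_min hpos (by norm_num), min_le_right _ _, ?_⟩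
      intro i j hi1 hi2 hj1 hj2 hij
      exact le_trans (min_le_left _ _)
        (Finset.inf'_le _ (hmemS i j hi1 hi2 hj1 hj2 hij))
  -- constants
  set c := ∑ i ∈ Finset.Icc (k+1) N, m i with hc_def
  have hc : 0 < c := Finset.sum_pos (fun i _ => hm i)
    ⟨k+1, by simp [Finset.mem_Icc]; omega⟩
  set PN := (Finset.range (N+1)) ×ˢ (Finset.range (N+1)) with hPN
  set Pk := (Finset.range (k+1)) ×ˢ (Finset.range (k+1)) with hPk
  have hsub : Pk ⊆ PN := Finset.product_subset_product
    (Finset.range_subset_range.mpr (by omega)) (Finset.range_subset_range.mpr (by omega))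
  set M := ∑ q ∈ PN, m q.1 * m q.2 with hM_def
  have hMpos : 0 < M := Finset.sum_pos (fun q _ => mul_pos (hm _) (hm _))
    ⟨(0,0), by simp [hPN]⟩
  have hcd0 : 0 < c * d0 ^ s := mul_pos hc (Real.rpow_pos_of_pos hd0pos s)
  set A := M / (c * d0 ^ s) + 1 with hA_def
  have hApos : 0 < A := by positivity
  set B := A ^ (s - p)⁻¹ with hB_def
  have hBnonneg : 0 ≤ B := Real.rpow_nonneg hApos.le _
  refine ⟨max (2*R0+1) B, lt_of_lt_of_le (by linarith) (le_max_left _ _), ?_⟩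
  intro R hR
  have hR1 : 2*R0+1 ≤ R := le_trans (le_max_left _ _) hR
  have hRB : B ≤ R := le_trans (le_max_right _ _) hR
  have hRpos : 0 < R := by linarith
  set x : ℕ → EuclideanSpace ℝ (Fin d) :=
    fun i => if i ≤ k then a i else R • y (i - k) with hx_def
  have hxa : ∀ i, i ≤ k → x i = a i := by
    intro i hi; simp [hx_def, hi]
  have hxnorm : ∀ i, k+1 ≤ i → i ≤ N → ‖x i‖ = R := by
    intro i hi1 hi2
    have hik : ¬ i ≤ k := by omega
    simp [hx_def, hik, norm_smul, hy (i-k) (by omega) (by omega),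
      abs_of_pos hRpos]
  -- uniform distance lower bound for pairs not both fixed
  have hdist : ∀ i, i ≤ N → ∀ j, j ≤ N → i ≠ j → ¬(i ≤ k ∧ j ≤ k) →
      d0 * R ≤ ‖x i - x j‖ := by
    have key : ∀ i, i ≤ k → ∀ j, ¬ j ≤ k → j ≤ N → d0 * R ≤ ‖x i - x j‖ := by
      intro i hik j hjk hjN
      have h1 : ‖x j‖ - ‖x i‖ ≤ ‖x i - x j‖ := by
        rw [norm_sub_rev]; exact norm_sub_norm_le _ _
      have h2 : ‖x i‖ < R0 := by
        rw [hxa i hik]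
        simpa [mem_ball, dist_eq_norm] using haball i hik
      have h3 : ‖x j‖ = R := hxnorm j (by omega) hjN
      nlinarith
    intro i hiN j hjN hij hnot
    by_cases hik : i ≤ k
    · exact key i hik j (fun h => hnot ⟨hik, h⟩) hjN
    · by_cases hjk : j ≤ k
      · rw [norm_sub_rev]; exact key j hjk i hik hiN
      · have h1 : x i - x j = R • (y (i-k) - y (j-k)) := by
          simp [hx_def, hik, hjk, smul_sub]
        rw [h1, norm_smul, Real.norm_eq_abs, abs_of_pos hRpos]
        have hle := hd0 (i-k) (j-k) (by omega) (by omega) (by omega) (by omega)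
          (by omega)
        nlinarith
  -- key numeric inequality
  have hd0Rpos : 0 < d0 * R := mul_pos hd0pos hRpos
  have hkey : M / (d0*R)^s < c / R^p := by
    rw [div_lt_div_iff₀ (Real.rpow_pos_of_pos hd0Rpos s) (Real.rpow_pos_of_pos hRpos p)]
    have h1 : (d0*R)^s = d0^s * R^s := Real.mul_rpow hd0pos.le hRpos.le
    have h2 : R^s = R^p * R^(s-p) := by
      rw [← Real.rpow_add hRpos]; ring_nf
    have hBsp : B ^ (s-p) = A := by
      rw [hB_def, ← Real.rpow_mul hApos.le, inv_mul_cancel₀ (by linarith : s - p ≠ 0),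
        Real.rpow_one]
    have h3 : M / (c * d0^s) < R^(s-p) := by
      have : B ^ (s-p) ≤ R ^ (s-p) :=
        Real.rpow_le_rpow hBnonneg hRB (by linarith)
      rw [hBsp] at this
      calc M / (c * d0^s) < A := by rw [hA_def]; linarith
        _ ≤ R ^ (s-p) := this
    have h4 : M < (c * d0^s) * R^(s-p) := by
      have h := (div_lt_iff₀ hcd0).mp h3
      linarith [mul_comm (R^(s-p)) (c * d0^s)]
    have hRp : (0:ℝ) < R^p := Real.rpow_pos_of_pos hRpos p
    calc M * R^p < ((c * d0^s) * R^(s-p)) * R^p := by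
          exact mul_lt_mul_of_pos_right h4 hRp
      _ = c * (d0*R)^s := by rw [h1, h2]; ring
  -- sum over pairs, as product sums
  have hrep_conv : ∀ (z : ℕ → EuclideanSpace ℝ (Fin d)) (n : ℕ),
      (∑ i ∈ Finset.range (n+1), ∑ j ∈ Finset.range (n+1),
        if i = j then 0 else m i * m j / ‖z i - z j‖ ^ s)
      = ∑ q ∈ (Finset.range (n+1)) ×ˢ (Finset.range (n+1)),
          (if q.1 = q.2 then 0 else m q.1 * m q.2 / ‖z q.1 - z q.2‖ ^ s) := by
    intro z n
    rw [Finset.sum_product]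
  -- rest sum bound
  have hrest : ∑ q ∈ PN \ Pk,
      (if q.1 = q.2 then 0 else m q.1 * m q.2 / ‖x q.1 - x q.2‖ ^ s)
      ≤ M / (d0*R)^s := by
    have h1 : ∑ q ∈ PN \ Pk,
        (if q.1 = q.2 then 0 else m q.1 * m q.2 / ‖x q.1 - x q.2‖ ^ s)
        ≤ ∑ q ∈ PN \ Pk, m q.1 * m q.2 / (d0*R)^s := by
      apply Finset.sum_le_sum
      intro q hq
      obtain ⟨hqN, hqk⟩ := Finset.mem_sdiff.mp hq
      simp only [hPN, Finset.mem_product, Finset.mem_range] at hqN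
      simp only [hPk, Finset.mem_product, Finset.mem_range] at hqk
      by_cases he : q.1 = q.2
      · simp only [he, if_pos rfl]
        exact div_nonneg (mul_nonneg (hm _).le (hm _).le)
          (Real.rpow_nonneg hd0Rpos.le _)
      · simp only [if_neg he]
        have hge := hdist q.1 (by omega) q.2 (by omega) he (by omega)
        apply div_le_div_of_nonneg_left (mul_nonneg (hm _).le (hm _).le)
          (Real.rpow_pos_of_pos hd0Rpos s)
        exact Real.rpow_le_rpow hd0Rpos.le hge hs0.le
    have h2 : ∑ q ∈ PN \ Pk, m q.1 * m q.2 / (d0*R)^s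
        ≤ ∑ q ∈ PN, m q.1 * m q.2 / (d0*R)^s := by
      apply Finset.sum_le_sum_of_subset_of_nonneg (Finset.sdiff_subset)
      intro q _ _
      exact div_nonneg (mul_nonneg (hm _).le (hm _).le)
        (Real.rpow_nonneg hd0Rpos.le _)
    calc _ ≤ ∑ q ∈ PN \ Pk, m q.1 * m q.2 / (d0*R)^s := h1
      _ ≤ ∑ q ∈ PN, m q.1 * m q.2 / (d0*R)^s := h2
      _ = M / (d0*R)^s := by rw [hM_def, Finset.sum_div]
  -- splitting the repulsion sum
  have hrepN : (∑ q ∈ PN, (if q.1 = q.2 then 0 else m q.1 * m q.2 / ‖x q.1 - x q.2‖ ^ s))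
      = (∑ q ∈ Pk, (if q.1 = q.2 then 0 else m q.1 * m q.2 / ‖a q.1 - a q.2‖ ^ s))
        + ∑ q ∈ PN \ Pk, (if q.1 = q.2 then 0 else m q.1 * m q.2 / ‖x q.1 - x q.2‖ ^ s) := by
    rw [← Finset.sum_sdiff hsub]
    have : (∑ q ∈ Pk, (if q.1 = q.2 then 0 else m q.1 * m q.2 / ‖x q.1 - x q.2‖ ^ s))
        = ∑ q ∈ Pk, (if q.1 = q.2 then 0 else m q.1 * m q.2 / ‖a q.1 - a q.2‖ ^ s) := by
      apply Finset.sum_congr rfl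
      intro q hq
      simp only [hPk, Finset.mem_product, Finset.mem_range] at hq
      rw [hxa q.1 (by omega), hxa q.2 (by omega)]
    rw [this]; ring
  -- splitting the attraction sum
  have hatt : ∑ i ∈ Finset.Icc 1 N, m i / ‖x i‖ ^ p
      = (∑ i ∈ Finset.Icc 1 k, m i / ‖a i‖ ^ p) + c / R^p := by
    have hsplit : ∑ i ∈ Finset.Icc 1 N, m i / ‖x i‖ ^ p
        = (∑ i ∈ Finset.Icc 1 k, m i / ‖x i‖ ^ p)
          + ∑ i ∈ Finset.Icc (k+1) N, m i / ‖x i‖ ^ p := by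
      rw [← Finset.Ico_add_one_right_eq_Icc 1 N, ← Finset.Ico_add_one_right_eq_Icc 1 k, ← Finset.Ico_add_one_right_eq_Icc (k+1) N]
      exact (Finset.sum_Ico_consecutive _ (by omega) (by omega)).symm
    rw [hsplit]
    congr 1
    · apply Finset.sum_congr rfl
      intro i hi
      rw [hxa i (Finset.mem_Icc.mp hi).2]
    · rw [hc_def, Finset.sum_div]
      apply Finset.sum_congr rfl
      intro i hi
      rw [hxnorm i (Finset.mem_Icc.mp hi).1 (Finset.mem_Icc.mp hi).2]
  -- put everything together
  have e1 : discF d s p m x N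
      = (∑ q ∈ Pk, (if q.1 = q.2 then 0 else m q.1 * m q.2 / ‖a q.1 - a q.2‖ ^ s))
        + (∑ q ∈ PN \ Pk, (if q.1 = q.2 then 0 else m q.1 * m q.2 / ‖x q.1 - x q.2‖ ^ s))
        - ((∑ i ∈ Finset.Icc 1 k, m i / ‖a i‖ ^ p) + c / R^p) := by
    rw [discF, hrep_conv x N, hrepN, hatt]
  have e2 : discF d s p m a k
      = (∑ q ∈ Pk, (if q.1 = q.2 then 0 else m q.1 * m q.2 / ‖a q.1 - a q.2‖ ^ s))
        - ∑ i ∈ Finset.Icc 1 k, m i / ‖a i‖ ^ p := by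
    rw [discF, hrep_conv a k]
  show discF d s p m x N < discF d s p m a k
  rw [e1, e2]
  linarith
end
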